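/- Let F be a field of characteristic zero, let λ2, λ3 ∈ F \ {0,1} with λ2 ≠ λ3 and λ2·λ3 ≠ 1, and let q, r ∈ F satisfy q² = λ2λ3 and r² = (1−λ2)(1−λ3). For l ∈ {1,2} set Λ_l = (−(λ2+λ3) + (−1)^l·2q)/r². Then for all X, Y, Z ∈ F with Y² = X·Z·(X−Z)(X−λ2λ3 Z)(X−λ2 Z)(X−λ3 Z), the elements x_l = r(X−λ2 Z)(X−λ3 Z)XZ, y_l = (X−(−1)^l q Z)·Y, z_l = r³X²Z² satisfy the Legendre equation y_l² z_l = x_l (x_l − z_l)(x_l − Λ_l z_l). Moreover Λ1Λ2 = ((λ2+λ3)² − 4λ2λ3)/((1−λ2)²(1−λ3)²) and Λ1+Λ2 = −2(λ2+λ3)/((1−λ2)(1−λ3)). -/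

import Mathlib

/-- The quotient maps from the genus-two curve
`C₀ : Y² = XZ(X−Z)(X−λ₂λ₃Z)(X−λ₂Z)(X−λ₃Z)` (Rosenhain form with λ₁ = λ₂λ₃) to the
Legendre elliptic curves `E_l : y²z = x(x−z)(x−Λ_l z)`, together with the symmetric
functions of the moduli `Λ₁, Λ₂`. -/
theorem stmt_0 (F : Type*) [Field F] [CharZero F]
    (l2 l3 q r : F)
    (hl2 : l2 ≠ 0) (hl2' : l2 ≠ 1) (hl3 : l3 ≠ 0) (hl3' : l3 ≠ 1)
    (hne : l2 ≠ l3) (hprod : l2 * l3 ≠ 1)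
    (hq : q ^ 2 = l2 * l3) (hr : r ^ 2 = (1 - l2) * (1 - l3))
    (Λ : ℕ → F)
    (hΛ : ∀ l : ℕ, (l = 1 ∨ l = 2) →
      Λ l = (-(l2 + l3) + (-1 : F) ^ l * (2 * q)) / r ^ 2) :
    (∀ l : ℕ, (l = 1 ∨ l = 2) → ∀ X Y Z : F,
      Y ^ 2 = X * Z * (X - Z) * (X - l2 * l3 * Z) * (X - l2 * Z) * (X - l3 * Z) →
      ((X - (-1 : F) ^ l * q * Z) * Y) ^ 2 * (r ^ 3 * X ^ 2 * Z ^ 2) =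
        (r * (X - l2 * Z) * (X - l3 * Z) * X * Z) *
          ((r * (X - l2 * Z) * (X - l3 * Z) * X * Z) - r ^ 3 * X ^ 2 * Z ^ 2) *
          ((r * (X - l2 * Z) * (X - l3 * Z) * X * Z) - Λ l * (r ^ 3 * X ^ 2 * Z ^ 2))) ∧
    Λ 1 * Λ 2 = ((l2 + l3) ^ 2 - 4 * (l2 * l3)) / ((1 - l2) ^ 2 * (1 - l3) ^ 2) ∧
    Λ 1 + Λ 2 = -(2 * (l2 + l3)) / ((1 - l2) * (1 - l3)) := by
  have h2 : (1 : F) - l2 ≠ 0 := sub_ne_zero.mpr (Ne.symm hl2')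
  have h3 : (1 : F) - l3 ≠ 0 := sub_ne_zero.mpr (Ne.symm hl3')
  have hr2 : r ^ 2 ≠ 0 := by rw [hr]; exact mul_ne_zero h2 h3
  have hr0 : r ≠ 0 := by
    intro h; apply hr2; rw [h]; ring
  refine ⟨?_, ?_, ?_⟩
  · rintro l (rfl | rfl) X Y Z hY
    · have key : Λ 1 * r ^ 2 = -(l2 + l3) - 2 * q := by
        rw [hΛ 1 (Or.inl rfl)]; field_simp; try ring
      linear_combination
        (r^3*X^2*Z^2*(X+q*Z)^2) * hY
        + (r^3*X^3*Z^5*(X-Z)*(X-l2*l3*Z)*(X-l2*Z)*(X-l3*Z)) * hq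
        + (r^3*X^4*Z^4*(X-l2*Z)*(X-l3*Z)*(X^2+2*q*X*Z+l2*l3*Z^2)) * hr
        + ((r * (X - l2 * Z) * (X - l3 * Z) * X * Z) *
            ((r * (X - l2 * Z) * (X - l3 * Z) * X * Z) - r ^ 3 * X ^ 2 * Z ^ 2) *
            (r * X^2 * Z^2)) * key
    · have key : Λ 2 * r ^ 2 = -(l2 + l3) + 2 * q := by
        rw [hΛ 2 (Or.inr rfl)]; field_simp; try ring
      linear_combination
        (r^3*X^2*Z^2*(X-q*Z)^2) * hY
        + (r^3*X^3*Z^5*(X-Z)*(X-l2*l3*Z)*(X-l2*Z)*(X-l3*Z)) * hq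
        + (r^3*X^4*Z^4*(X-l2*Z)*(X-l3*Z)*(X^2-2*q*X*Z+l2*l3*Z^2)) * hr
        + ((r * (X - l2 * Z) * (X - l3 * Z) * X * Z) *
            ((r * (X - l2 * Z) * (X - l3 * Z) * X * Z) - r ^ 3 * X ^ 2 * Z ^ 2) *
            (r * X^2 * Z^2)) * key
  · rw [hΛ 1 (Or.inl rfl), hΛ 2 (Or.inr rfl)]
    rw [div_mul_div_comm]
    rw [show r ^ 2 * r ^ 2 = ((1-l2)*(1-l3))^2 by rw [hr]; ring]
    rw [show ((1-l2)*(1-l3))^2 = (1-l2)^2*(1-l3)^2 by ring]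
    congr 1
    linear_combination (-4 : F) * hq
  · rw [hΛ 1 (Or.inl rfl), hΛ 2 (Or.inr rfl), ← add_div, hr]
    congr 1
    ring
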